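/- Let u, v > 0 be real numbers and set R₁ = u²·v² − 4·u²·v − 4·u·v² + 18·u·v − 27. If R₁ = 0 and (u, v) ≠ (3, 3), then the set of positive equilibria of Kopel's duopoly model, i.e. the set { (x, y) ∈ ℝ² : x > 0, y > 0, x = u·y·(1−y), y = v·x·(1−x) }, has exactly two elements. -/

import Mathlib

/-- If R₁ = 0 and (u,v) ≠ (3,3), Kopel's model has exactly two positive equilibria. -/
theorem kopel_two_positive_equilibria
    (u v : ℝ) (hu : 0 < u) (hv : 0 < v)
    (hR1 : u ^ 2 * v ^ 2 - 4 * u ^ 2 * v - 4 * u * v ^ 2 + 18 * u * v - 27 = 0)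
    (hne : (u, v) ≠ ((3 : ℝ), (3 : ℝ))) :
    {p : ℝ × ℝ | 0 < p.1 ∧ 0 < p.2 ∧
      p.1 = u * p.2 * (1 - p.2) ∧ p.2 = v * p.1 * (1 - p.1)}.encard = 2 := by
  have keyu : (u*(u-4)*v + u*(9-2*u))^2 = 4*u*(u-3)^3 := by
    linear_combination (u*(u-4)) * hR1
  have keyv : (v*(v-4)*u + v*(9-2*v))^2 = 4*v*(v-3)^3 := by
    linear_combination (v*(v-4)) * hR1
  have hu3 : 3 < u := by
    rcases lt_trichotomy u 3 with h|h|h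
    · exfalso
      nlinarith [keyu, sq_nonneg (u*(u-4)*v + u*(9-2*u)),
        mul_pos hu (pow_pos (show (0:ℝ) < 3 - u by linarith) 3)]
    · exfalso; apply hne
      subst h
      have h2 : (v-3)^2 = 0 := by linear_combination (-(1:ℝ)/3) * hR1
      have h3 : v = 3 := by nlinarith [sq_nonneg (v-3)]
      rw [h3]
    · exact h
  have hv3 : 3 < v := by
    rcases lt_trichotomy v 3 with h|h|h
    · exfalso
      nlinarith [keyv, sq_nonneg (v*(v-4)*u + v*(9-2*v)),
        mul_pos hv (pow_pos (show (0:ℝ) < 3 - v by linarith) 3)]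
    · exfalso; apply hne
      subst h
      have h2 : (u-3)^2 = 0 := by linear_combination (-(1:ℝ)/3) * hR1
      have h3 : u = 3 := by nlinarith [sq_nonneg (u-3)]
      rw [h3]
    · exact h
  have huv9 : 9 < u * v := by nlinarith
  have hDpos : 0 < u*v*(u-3) := mul_pos (mul_pos hu hv) (by linarith)
  have hD : u*v*(u-3) ≠ 0 := ne_of_gt hDpos
  have hD2pos : 0 < 2*(u*v*(u-3)) := by linarith
  have hD2 : 2*(u*v*(u-3)) ≠ 0 := ne_of_gt hD2pos
  -- N2 := 2u²v - 7uv + 9 > 0  (positivity of the double root)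
  have hid4 : (2*u^2*v-7*u*v+9) * (4*(u^2*v)*(2*(u*v*(u-3))))
      = 3*(u^2*v)*(2*u^2*v-7*u*v+9)^2 + u*v*(u+1)*(2*(u*v*(u-3)))^2 := by
    linear_combination (9*u^2*v) * hR1
  have hN2 : 0 < 2*u^2*v - 7*u*v + 9 := by
    by_contra hcon
    push_neg at hcon
    have hM : 0 < 4*(u^2*v)*(2*(u*v*(u-3))) :=
      mul_pos (mul_pos (by norm_num) (mul_pos (pow_pos hu 2) hv)) hD2pos
    have h1 : 0 ≤ 3*(u^2*v)*(2*u^2*v-7*u*v+9)^2 :=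
      mul_nonneg (le_of_lt (mul_pos (by norm_num) (mul_pos (pow_pos hu 2) hv)))
        (sq_nonneg _)
    have h2 : 0 < u*v*(u+1)*(2*(u*v*(u-3)))^2 :=
      mul_pos (mul_pos (mul_pos hu hv) (by linarith)) (pow_pos hD2pos 2)
    have h3 : (2*u^2*v-7*u*v+9) * (4*(u^2*v)*(2*(u*v*(u-3)))) ≤ 0 :=
      mul_nonpos_of_nonpos_of_nonneg hcon hM.le
    linarith
  -- q4 := u²v - 4uv + 9 > 0 (y1 < 1)
  have hq4id : (u^2*v-4*u*v+9)*(u*v-9)^2 = 4*(u*v^2)*(u-3)^3 := by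
    linear_combination (u^2*v-27) * hR1
  have hq4 : 0 < u^2*v - 4*u*v + 9 := by
    by_contra hcon
    push_neg at hcon
    have hM : 0 < (u*v-9)^2 := pow_pos (by linarith) 2
    have hrhs : 0 < 4*(u*v^2)*(u-3)^3 :=
      mul_pos (mul_pos (by norm_num) (mul_pos hu (pow_pos hv 2)))
        (pow_pos (by linarith) 3)
    have h3 : (u^2*v-4*u*v+9)*(u*v-9)^2 ≤ 0 :=
      mul_nonpos_of_nonpos_of_nonneg hcon hM.le
    linarith
  -- q6 := 2u²v - 9uv + 27 ≠ 0 (distinctness of the two roots)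
  have hq6 : 2*u^2*v - 9*u*v + 27 ≠ 0 := by
    intro h
    have h108 : 108*u*(u-3)^3 = 0 := by
      linear_combination (u*(2*u-9))^2 * hR1
        - (2*u^4*v - 8*u^4 - 17*u^3*v + 72*u^3 + 36*u^2*v - 189*u^2 + 108*u) * h
    have : 0 < 108*u*(u-3)^3 :=
      mul_pos (mul_pos (by norm_num) hu) (pow_pos (by linarith) 3)
    linarith
  -- the two roots
  set y1 : ℝ := (u*v-9)/(u*v*(u-3)) with hy1def
  set y2 : ℝ := (2*u^2*v-7*u*v+9)/(2*(u*v*(u-3))) with hy2def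
  have hy1pos : 0 < y1 := div_pos (by linarith) hDpos
  have hy1lt : y1 < 1 := by
    rw [hy1def, div_lt_one hDpos]; nlinarith
  have hy2pos : 0 < y2 := div_pos hN2 hD2pos
  have hy2lt : y2 < 1 := by
    rw [hy2def, div_lt_one hD2pos]; nlinarith
  have hy12 : y1 ≠ y2 := by
    intro h
    rw [hy1def, hy2def, div_eq_div_iff hD hD2] at h
    have h2 : (2*u^2*v - 9*u*v + 27) * (u*v*(u-3)) = 0 := by linear_combination -h
    rcases mul_eq_zero.mp h2 with h3|h3
    · exact hq6 h3
    · exact hD h3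
  -- cubic vanishing at y1 and y2
  have hc1' : u^2*v*(u*v-9)^3 - 2*u^2*v*(u*v-9)^2*(u*v*(u-3))
      + u*v*(u+1)*(u*v-9)*(u*v*(u-3))^2 - (u*v-1)*(u*v*(u-3))^3 = 0 := by
    linear_combination (2*u^4*v^2 - 9*u^3*v^2 + 27*u^2*v) * hR1
  have hc1 : u^2*v*y1^3 - 2*u^2*v*y1^2 + u*v*(u+1)*y1 - (u*v-1) = 0 := by
    rw [hy1def]
    have hu3' : u - 3 ≠ 0 := by linarith
    field_simp
    linear_combination (2*u^2*v - 9*u*v + 27) * hR1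
  have hc2' : u^2*v*(2*u^2*v-7*u*v+9)^3 - 2*u^2*v*(2*u^2*v-7*u*v+9)^2*(2*(u*v*(u-3)))
      + u*v*(u+1)*(2*u^2*v-7*u*v+9)*(2*(u*v*(u-3)))^2 - (u*v-1)*(2*(u*v*(u-3)))^3 = 0 := by
    linear_combination (-(2*u^4*v^2 - 9*u^3*v^2 + 27*u^2*v)) * hR1
  have hc2 : u^2*v*y2^3 - 2*u^2*v*y2^2 + u*v*(u+1)*y2 - (u*v-1) = 0 := by
    rw [hy2def]
    have hu3' : u - 3 ≠ 0 := by linarith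
    field_simp
    linear_combination (-(2*u^2*v - 9*u*v + 27)) * hR1
  -- set equality
  have hset : {p : ℝ × ℝ | 0 < p.1 ∧ 0 < p.2 ∧
      p.1 = u * p.2 * (1 - p.2) ∧ p.2 = v * p.1 * (1 - p.1)}
      = {(u*y1*(1-y1), y1), (u*y2*(1-y2), y2)} := by
    ext ⟨x, y⟩
    simp only [Set.mem_setOf_eq, Set.mem_insert_iff, Set.mem_singleton_iff, Prod.mk.injEq]
    constructor
    · rintro ⟨hx, hy, hxy, hyx⟩
      have hcubic : u^2*v*y^3 - 2*u^2*v*y^2 + u*v*(u+1)*y - (u*v-1) = 0 := by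
        have h0 : y * (u^2*v*y^3 - 2*u^2*v*y^2 + u*v*(u+1)*y - (u*v-1)) = 0 := by
          rw [hxy] at hyx
          linear_combination hyx
        rcases mul_eq_zero.mp h0 with h|h
        · exact absurd h (ne_of_gt hy)
        · exact h
      have hAB : (u*v*(u-3)*y - (u*v-9)) * (2*(u*v*(u-3))*y - (2*u^2*v-7*u*v+9))^2 = 0 := by
        linear_combination (4*u*v^2*(u-3)^3) * hcubic
          + (9*u^2*v*y - 27*u*v*y - 8*u^2*v + 27*u*v - 27) * hR1
      rcases mul_eq_zero.mp hAB with h|h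
      · left
        have hyy : y = y1 := by
          rw [hy1def, eq_div_iff hD]; linear_combination h
        exact ⟨by rw [hxy, hyy], hyy⟩
      · right
        have h' : 2*(u*v*(u-3))*y - (2*u^2*v-7*u*v+9) = 0 := by
          exact sq_eq_zero_iff.mp h
        have hyy : y = y2 := by
          rw [hy2def, eq_div_iff hD2]; linear_combination h'
        exact ⟨by rw [hxy, hyy], hyy⟩
    · rintro (⟨hx, hy⟩|⟨hx, hy⟩) <;> subst hx <;> subst hy
      · refine ⟨mul_pos (mul_pos hu hy1pos) (by linarith), hy1pos, rfl, ?_⟩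
        linear_combination y1 * hc1
      · refine ⟨mul_pos (mul_pos hu hy2pos) (by linarith), hy2pos, rfl, ?_⟩
        linear_combination y2 * hc2
  rw [hset]
  refine Set.encard_pair ?_
  intro h
  rw [Prod.mk.injEq] at h
  exact hy12 h.2
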